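/- Let λ̂₁, λ̂₂, μ̂₁, μ̂₂ > 0 with λ̂ = λ̂₁+λ̂₂, and set ξ₁ = μ̂₁+μ̂₂+λ̂+2√(λ̂₁μ̂₁), ξ₂ = μ̂₁+μ̂₂+λ̂−2√(λ̂₁μ̂₁). Assume λ̂₁ < μ̂₁ and ξ₂² ≥ 4λ̂₂μ̂₂. Then the four roots y₁ = (ξ₁−√(ξ₁²−4λ̂₂μ̂₂))/(2λ̂₂), y₂ = (ξ₂−√(ξ₂²−4λ̂₂μ̂₂))/(2λ̂₂), y₃ = (ξ₂+√(ξ₂²−4λ̂₂μ̂₂))/(2λ̂₂), y₄ = (ξ₁+√(ξ₁²−4λ̂₂μ̂₂))/(2λ̂₂) satisfy 0 < y₁ < y₂ < 1 < y₃ < y₄. -/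

import Mathlib

set_option maxHeartbeats 800000


theorem stmt_6 (l1 l2 m1 m2 : ℝ)
    (hl1 : 0 < l1) (hl2 : 0 < l2) (hm1 : 0 < m1) (hm2 : 0 < m2)
    (hlt : l1 < m1)
    (lam xi1 xi2 : ℝ) (hlam : lam = l1 + l2)
    (hxi1 : xi1 = m1 + m2 + lam + 2 * Real.sqrt (l1 * m1))
    (hxi2 : xi2 = m1 + m2 + lam - 2 * Real.sqrt (l1 * m1))
    (hdisc : xi2 ^ 2 ≥ 4 * l2 * m2)
    (y1 y2 y3 y4 : ℝ)
    (hy1 : y1 = (xi1 - Real.sqrt (xi1 ^ 2 - 4 * l2 * m2)) / (2 * l2))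
    (hy2 : y2 = (xi2 - Real.sqrt (xi2 ^ 2 - 4 * l2 * m2)) / (2 * l2))
    (hy3 : y3 = (xi2 + Real.sqrt (xi2 ^ 2 - 4 * l2 * m2)) / (2 * l2))
    (hy4 : y4 = (xi1 + Real.sqrt (xi1 ^ 2 - 4 * l2 * m2)) / (2 * l2)) :
    0 < y1 ∧ y1 < y2 ∧ y2 < 1 ∧ 1 < y3 ∧ y3 < y4 := by
  have h2l2 : (0:ℝ) < 2 * l2 := by linarith
  -- sqrt facts about l1 m1
  have hs : Real.sqrt (l1 * m1) = Real.sqrt l1 * Real.sqrt m1 :=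
    Real.sqrt_mul hl1.le m1
  have hsl1 : Real.sqrt l1 ^ 2 = l1 := Real.sq_sqrt hl1.le
  have hsm1 : Real.sqrt m1 ^ 2 = m1 := Real.sq_sqrt hm1.le
  have hslt : Real.sqrt l1 < Real.sqrt m1 := Real.sqrt_lt_sqrt hl1.le hlt
  -- xi2 > l2 + m2
  have hxi2gt : l2 + m2 < xi2 := by
    rw [hxi2, hlam, hs]
    nlinarith [sq_nonneg (Real.sqrt m1 - Real.sqrt l1), hslt]
  have hxi2pos : 0 < xi2 := by linarith
  have hxi12 : xi2 < xi1 := by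
    rw [hxi1, hxi2]
    have : 0 < Real.sqrt (l1 * m1) := Real.sqrt_pos.2 (by positivity)
    linarith
  have hxi1pos : 0 < xi1 := by linarith
  -- discriminants
  have hc : (0:ℝ) < 4 * l2 * m2 := by positivity
  have hd2pos : 0 < xi2 ^ 2 - 4 * l2 * m2 := by nlinarith [sq_nonneg (l2 - m2)]
  have hd1pos : 0 < xi1 ^ 2 - 4 * l2 * m2 := by nlinarith
  set d1 := Real.sqrt (xi1 ^ 2 - 4 * l2 * m2) with hd1
  set d2 := Real.sqrt (xi2 ^ 2 - 4 * l2 * m2) with hd2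
  have hd1sq : d1 ^ 2 = xi1 ^ 2 - 4 * l2 * m2 := Real.sq_sqrt hd1pos.le
  have hd2sq : d2 ^ 2 = xi2 ^ 2 - 4 * l2 * m2 := Real.sq_sqrt hd2pos.le
  have hd1p : 0 < d1 := Real.sqrt_pos.2 hd1pos
  have hd2p : 0 < d2 := Real.sqrt_pos.2 hd2pos
  have hd1lt : d1 < xi1 := by
    calc d1 < Real.sqrt (xi1 ^ 2) := Real.sqrt_lt_sqrt hd1pos.le (by linarith)
      _ = xi1 := Real.sqrt_sq hxi1pos.le
  have hd2lt : d2 < xi2 := by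
    calc d2 < Real.sqrt (xi2 ^ 2) := Real.sqrt_lt_sqrt hd2pos.le (by linarith)
      _ = xi2 := Real.sqrt_sq hxi2pos.le
  have hd12 : d2 < d1 := by
    apply Real.sqrt_lt_sqrt hd2pos.le
    nlinarith
  have e1 : (xi1 - d1) * (xi1 + d1) = 4 * l2 * m2 := by linear_combination -hd1sq
  have e2 : (xi2 - d2) * (xi2 + d2) = 4 * l2 * m2 := by linear_combination -hd2sq
  have hkey : xi1 - d1 < xi2 - d2 := by
    by_contra h
    push_neg at h
    have h1 : (xi2 - d2) * (xi2 + d2) < (xi1 - d1) * (xi1 + d1) := by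
      calc (xi2 - d2) * (xi2 + d2) ≤ (xi1 - d1) * (xi2 + d2) :=
            mul_le_mul_of_nonneg_right h (by linarith)
        _ < (xi1 - d1) * (xi1 + d1) :=
            mul_lt_mul_of_pos_left (by linarith) (by linarith)
    rw [e1, e2] at h1
    exact lt_irrefl _ h1
  subst hy1 hy2 hy3 hy4
  refine ⟨div_pos (by linarith) h2l2, ?_, ?_, ?_, ?_⟩
  · rw [div_lt_div_iff₀ h2l2 h2l2]
    exact (mul_lt_mul_iff_of_pos_right h2l2).2 hkey
  · rw [div_lt_one h2l2]
    nlinarith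
  · rw [lt_div_iff₀ h2l2]
    nlinarith
  · rw [div_lt_div_iff₀ h2l2 h2l2]
    exact (mul_lt_mul_iff_of_pos_right h2l2).2 (by linarith)
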